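/- Suppose a : [s₀,s*] → ℝ^N is C¹, each component a_j satisfies |(a_j)_s + μ_j a_j| ≤ C s^{−n/2−1} with μ_j ≤ −c < 0, and at s = s* we have Σ_j a_j(s*)² = (s*)^{−n}. Then for s₀ sufficiently large (depending on c, C, n, N), d/ds [ s^n Σ_j a_j(s)² ] at s = s* is strictly positive; in fact it is at least c·s^{n}·Σ a_j(s*)² + O(s^{−1}) ≥ c/2. -/

import Mathlib

open Real

/-- Outgoing flux at the exit time: if each component of `a : [s₀,s*] → ℝ^N` satisfies
`|(a_j)_s + μ_j a_j| ≤ C s^{-n/2-1}` with `μ_j ≤ -c < 0`, and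
`Σ_j a_j(s*)² = (s*)^{-n}`, then for `s₀` large enough the derivative of
`s ↦ s^n Σ_j a_j(s)²` at `s = s*` is at least `c/2`, in particular strictly positive. -/
theorem brouwer_outgoing_flux (N n : ℕ) (c C : ℝ) (hc : 0 < c) (hC : 0 < C) :
    ∃ S₀ : ℝ, 0 < S₀ ∧
      ∀ s₀ sstar : ℝ, S₀ ≤ s₀ → s₀ ≤ sstar →
      ∀ (a : ℝ → Fin N → ℝ) (μ : Fin N → ℝ),
        (∀ j, μ j ≤ -c) →
        (∀ j, ContDiff ℝ 1 (fun s => a s j)) →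
        (∀ s, s₀ ≤ s → s ≤ sstar → ∀ j,
          |deriv (fun t => a t j) s + μ j * a s j| ≤ C * s ^ (-(n : ℝ) / 2 - 1)) →
        (∑ j, (a sstar j) ^ 2 = sstar ^ (-(n : ℝ))) →
        c / 2 ≤ deriv (fun s => s ^ n * ∑ j, (a s j) ^ 2) sstar
        ∧ 0 < deriv (fun s => s ^ n * ∑ j, (a s j) ^ 2) sstar := by
  refine ⟨max 1 (4 * C * (N + 1) / c), lt_of_lt_of_le one_pos (le_max_left _ _), ?_⟩
  intro s₀ sstar hS0 hss a μ hμ ha hde hexit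
  have hs1 : (1 : ℝ) ≤ sstar := le_trans (le_max_left _ _) (le_trans hS0 hss)
  have hsbig : 4 * C * (N + 1) / c ≤ sstar :=
    le_trans (le_max_right _ _) (le_trans hS0 hss)
  have hs : (0 : ℝ) < sstar := lt_of_lt_of_le one_pos hs1
  set d : Fin N → ℝ := fun j => deriv (fun t => a t j) sstar with hd
  have hda : ∀ j, HasDerivAt (fun t => a t j) (d j) sstar := fun j =>
    (((ha j).differentiable one_ne_zero) sstar).hasDerivAt
  have hsum : HasDerivAt (fun s => ∑ j, (a s j) ^ 2)
      (∑ j, 2 * a sstar j * d j) sstar := by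
    apply HasDerivAt.fun_sum
    intro j _
    have := (hda j).fun_pow 2
    simpa using this
  have hprod : HasDerivAt (fun s => s ^ n * ∑ j, (a s j) ^ 2)
      ((n : ℝ) * sstar ^ (n - 1) * (∑ j, (a sstar j) ^ 2)
        + sstar ^ n * ∑ j, 2 * a sstar j * d j) sstar :=
    (hasDerivAt_pow n sstar).mul hsum
  have hderiv : deriv (fun s => s ^ n * ∑ j, (a s j) ^ 2) sstar
      = (n : ℝ) * sstar ^ (n - 1) * (∑ j, (a sstar j) ^ 2)
        + sstar ^ n * ∑ j, 2 * a sstar j * d j := hprod.deriv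
  set E : ℝ := C * sstar ^ (-(n : ℝ) / 2 - 1) with hE
  have hEpos : 0 < E := by
    apply mul_pos hC (Real.rpow_pos_of_pos hs _)
  have herr : ∀ j, |d j + μ j * a sstar j| ≤ E := hde sstar hss le_rfl
  -- pointwise lower bound
  have hlow : ∀ j, 2 * c * (a sstar j) ^ 2 - 2 * E * |a sstar j| ≤ 2 * a sstar j * d j := by
    intro j
    have h1 := herr j
    have h2 := hμ j
    have h3 : |a sstar j * (d j + μ j * a sstar j)| ≤ |a sstar j| * E := by
      rw [abs_mul]
      exact mul_le_mul_of_nonneg_left h1 (abs_nonneg _)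
    have h4 : -(|a sstar j| * E) ≤ a sstar j * (d j + μ j * a sstar j) :=
      neg_le_of_neg_le (le_trans (neg_le_abs _) h3) |>.trans_eq rfl
    have h5 : μ j * (a sstar j) ^ 2 ≤ -c * (a sstar j) ^ 2 :=
      mul_le_mul_of_nonneg_right h2 (sq_nonneg _)
    nlinarith [h4, h5]
  have hsum_low : 2 * c * (∑ j, (a sstar j) ^ 2) - 2 * E * (∑ j, |a sstar j|)
      ≤ ∑ j, 2 * a sstar j * d j := by
    have := Finset.sum_le_sum (fun j (_ : j ∈ Finset.univ) => hlow j)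
    simpa [Finset.sum_sub_distrib, Finset.mul_sum] using this
  set A : ℝ := ∑ j, (a sstar j) ^ 2 with hA
  have hsqrtA : Real.sqrt A = sstar ^ (-(n : ℝ) / 2) := by
    rw [hexit, Real.sqrt_eq_rpow, ← Real.rpow_mul hs.le]
    congr 1
    ring
  have habs : (∑ j, |a sstar j|) ≤ (N : ℝ) * Real.sqrt A := by
    have h1 : ∀ j, |a sstar j| ≤ Real.sqrt A := by
      intro j
      rw [← Real.sqrt_sq_eq_abs]
      apply Real.sqrt_le_sqrt
      exact Finset.single_le_sum (f := fun k => a sstar k ^ 2)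
        (fun k _ => sq_nonneg _) (Finset.mem_univ j)
    calc (∑ j, |a sstar j|) ≤ ∑ _j : Fin N, Real.sqrt A :=
          Finset.sum_le_sum (fun j _ => h1 j)
      _ = (N : ℝ) * Real.sqrt A := by
          simp [Finset.sum_const, nsmul_eq_mul]
  -- key rpow computations
  have hp1 : (sstar : ℝ) ^ n * A = 1 := by
    rw [hexit, ← Real.rpow_natCast sstar n, ← Real.rpow_add hs]
    simp
  have hp2 : (sstar : ℝ) ^ n * (E * ((N : ℝ) * Real.sqrt A)) = (N : ℝ) * C * sstar⁻¹ := by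
    rw [hsqrtA, hE, ← Real.rpow_natCast sstar n]
    rw [show (sstar ^ (n : ℝ) * (C * sstar ^ (-(n : ℝ) / 2 - 1) * ((N : ℝ) * sstar ^ (-(n : ℝ) / 2))))
        = (N : ℝ) * C * (sstar ^ (n : ℝ) * sstar ^ (-(n : ℝ) / 2 - 1) * sstar ^ (-(n : ℝ) / 2)) by ring]
    rw [← Real.rpow_add hs, ← Real.rpow_add hs,
      show (n : ℝ) + (-(n : ℝ) / 2 - 1) + -(n : ℝ) / 2 = (-1 : ℝ) by ring, Real.rpow_neg_one]
  -- bound the error term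
  have hinv : 2 * (N : ℝ) * C * sstar⁻¹ ≤ c / 2 := by
    have h4 : 4 * C * ((N : ℝ) + 1) ≤ sstar * c := (div_le_iff₀ hc).mp hsbig
    rw [mul_inv_le_iff₀ hs]
    nlinarith [hC.le]
  -- assemble
  have hfirst : 0 ≤ (n : ℝ) * sstar ^ (n - 1) * A := by
    have : 0 ≤ A := by
      rw [hA]; exact Finset.sum_nonneg fun j _ => sq_nonneg _
    positivity
  have hsecond : 2 * c - 2 * (N : ℝ) * C * sstar⁻¹ ≤ sstar ^ n * ∑ j, 2 * a sstar j * d j := by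
    have h1 : sstar ^ n * (2 * c * A - 2 * E * ((N : ℝ) * Real.sqrt A))
        ≤ sstar ^ n * ∑ j, 2 * a sstar j * d j := by
      apply mul_le_mul_of_nonneg_left _ (by positivity)
      calc 2 * c * A - 2 * E * ((N : ℝ) * Real.sqrt A)
          ≤ 2 * c * A - 2 * E * (∑ j, |a sstar j|) := by
            have := mul_le_mul_of_nonneg_left habs (by positivity : (0:ℝ) ≤ 2 * E)
            linarith
        _ ≤ ∑ j, 2 * a sstar j * d j := hsum_low
    have h2 : sstar ^ n * (2 * c * A - 2 * E * ((N : ℝ) * Real.sqrt A))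
        = 2 * c - 2 * (N : ℝ) * C * sstar⁻¹ := by
      have : sstar ^ n * (2 * c * A - 2 * E * ((N : ℝ) * Real.sqrt A))
          = 2 * c * (sstar ^ n * A) - 2 * (sstar ^ n * (E * ((N : ℝ) * Real.sqrt A))) := by
        ring
      rw [this, hp1, hp2]; ring
    linarith [h1, h2.symm.le]
  have hfinal : c / 2 ≤ deriv (fun s => s ^ n * ∑ j, (a s j) ^ 2) sstar := by
    rw [hderiv]
    have : 2 * c - 2 * (N : ℝ) * C * sstar⁻¹ ≥ 2 * c - c / 2 := by linarith
    linarith [hfirst, hsecond]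
  exact ⟨hfinal, lt_of_lt_of_le (by linarith) hfinal⟩
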